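/- Let V be a finite set, f : 2^V → ℝ a submodular function with f(∅) = 0, and μ ≥ max{0, −f(V)} a value such that μ = −f(W) for some W ⊆ V. Then L₁(f_μ) ≤ 4 · L₁(f). -/

import Mathlib

open Finset

noncomputable section
open scoped Classical

variable {V : Type*} [Fintype V] [DecidableEq V]

/-- A set function `f : 2^V → ℝ` is submodular if
`f(X∩Y) + f(X∪Y) ≤ f(X) + f(Y)` for all `X, Y ⊆ V`. -/
def IsSubmodular (f : Finset V → ℝ) : Prop :=
  ∀ X Y : Finset V, f (X ∩ Y) + f (X ∪ Y) ≤ f X + f Y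

/-- The base polytope `B(f)` of a submodular function. -/
def basePolytope (f : Finset V → ℝ) : Set (V → ℝ) :=
  {x | (∀ S : Finset V, ∑ v ∈ S, x v ≤ f S) ∧ (∑ v, x v) = f Finset.univ}

/-- The `μ`-enlargement `f_μ` of `f`. -/
def muEnlargement (f : Finset V → ℝ) (μ : ℝ) : Finset V → ℝ :=
  fun S => if S = ∅ ∨ S = Finset.univ then 0 else f S + μ

/-- `L₁(f) = max{‖z‖₁ : z ∈ B(f)}`. -/
noncomputable def Lone (f : Finset V → ℝ) : ℝ :=
  sSup {t : ℝ | ∃ x ∈ basePolytope f, t = ∑ v, |x v|}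

/-- Greedy vector: for any set `S` there is a point of the base polytope
which is tight on `S`. -/
theorem exists_base_tight (f : Finset V → ℝ) (hf : IsSubmodular f) (h0 : f ∅ = 0)
    (S : Finset V) : ∃ x ∈ basePolytope f, ∑ v ∈ S, x v = f S := by
  classical
  set l : List V := S.toList ++ Sᶜ.toList with hl
  have hnd : l.Nodup := by
    refine List.Nodup.append S.nodup_toList Sᶜ.nodup_toList ?_
    intro a ha hb
    rw [Finset.mem_toList] at ha hb
    exact (Finset.mem_compl.mp hb) ha
  have hmem : ∀ v : V, v ∈ l := by
    intro v
    by_cases hv : v ∈ S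
    · exact List.mem_append_left _ (Finset.mem_toList.mpr hv)
    · exact List.mem_append_right _ (Finset.mem_toList.mpr (Finset.mem_compl.mpr hv))
  set A : ℕ → Finset V := fun i => (l.take i).toFinset with hA
  set x : V → ℝ := fun v => f (A (l.idxOf v + 1)) - f (A (l.idxOf v)) with hx
  -- take (i+1) splits
  have htake : ∀ i (hi : i < l.length), l.take (i + 1) = l.take i ++ [l.get ⟨i, hi⟩] := by
    intro i hi
    rw [List.take_succ]
    congr 1
    rw [List.getElem?_eq_getElem hi]
    rfl
  have hAstep : ∀ i, (hi : i < l.length) → A (i + 1) = insert (l.get ⟨i, hi⟩) (A i) := by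
    intro i hi
    simp only [hA]
    rw [htake i hi, List.toFinset_append]
    rw [Finset.union_comm]
    exact (Finset.insert_eq _ _).symm
  have hnotmem : ∀ i, (hi : i < l.length) → l.get ⟨i, hi⟩ ∉ A i := by
    intro i hi hmem'
    simp only [hA, List.mem_toFinset] at hmem'
    have h1 : (l.take (i + 1)).Nodup := (List.Sublist.nodup (List.take_sublist _ _) hnd)
    rw [htake i hi] at h1
    have := List.disjoint_of_nodup_append h1
    exact this hmem' (by simp)
  have hidx : ∀ i, (hi : i < l.length) → l.idxOf (l.get ⟨i, hi⟩) = i := by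
    intro i hi
    exact List.get_idxOf hnd ⟨i, hi⟩
  -- tightness on prefixes
  have lem1 : ∀ i, ∑ v ∈ A i, x v = f (A i) := by
    intro i
    induction i with
    | zero => simp [hA, h0]
    | succ i ih =>
      by_cases hi : i < l.length
      · rw [hAstep i hi, Finset.sum_insert (hnotmem i hi), ih]
        simp only [hx]
        rw [hidx i hi, hAstep i hi]
        ring
      · have : l.take (i + 1) = l.take i := by
          rw [List.take_of_length_le (by omega), List.take_of_length_le (by omega)]
        simp only [hA]
        rw [this]
        exact ih
  -- feasibility
  have lem2 : ∀ i, ∀ T : Finset V, T ⊆ A i → ∑ v ∈ T, x v ≤ f T := by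
    intro i
    induction i with
    | zero =>
      intro T hT
      simp only [hA, List.take_zero, List.toFinset_nil] at hT
      rw [Finset.subset_empty.mp hT]
      simp [h0]
    | succ i ih =>
      intro T hT
      by_cases hi : i < l.length
      · set a := l.get ⟨i, hi⟩ with ha
        by_cases haT : a ∈ T
        · have hT' : T.erase a ⊆ A i := by
            intro v hv
            have hv1 := Finset.mem_of_mem_erase hv
            have hv2 := Finset.ne_of_mem_erase hv
            have := hT hv1
            rw [hAstep i hi] at this
            rcases Finset.mem_insert.mp this with h | h
            · exact absurd h hv2
            · exact h
          have hsum : ∑ v ∈ T, x v = x a + ∑ v ∈ T.erase a, x v :=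
            (Finset.add_sum_erase _ _ haT).symm
          have hsub := hf (A i) T
          have hint : A i ∩ T = T.erase a := by
            ext v
            simp only [Finset.mem_inter, Finset.mem_erase]
            constructor
            · rintro ⟨h1, h2⟩
              refine ⟨fun hva => (hnotmem i hi) ?_, h2⟩
              rw [← ha, ← hva]
              exact h1
            · rintro ⟨h1, h2⟩
              exact ⟨hT' (Finset.mem_erase.mpr ⟨h1, h2⟩), h2⟩
          have huni : A i ∪ T = A (i + 1) := by
            rw [hAstep i hi]
            apply Finset.Subset.antisymm
            · intro v hv
              rcases Finset.mem_union.mp hv with h | h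
              · exact Finset.mem_insert_of_mem h
              · have := hT h
                rwa [hAstep i hi] at this
            · intro v hv
              rcases Finset.mem_insert.mp hv with h | h
              · refine Finset.mem_union_right _ ?_
                rw [← ha] at h
                rw [h]
                exact haT
              · exact Finset.mem_union_left _ h
          rw [hint, huni] at hsub
          have hxa : x a = f (A (i + 1)) - f (A i) := by
            simp only [hx]
            rw [ha, hidx i hi]
          have h1 : ∑ v ∈ T.erase a, x v ≤ f (T.erase a) := ih _ hT'
          rw [hsum, hxa]
          linarith
        · apply ih
          intro v hv
          have := hT hv
          rw [hAstep i hi] at this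
          rcases Finset.mem_insert.mp this with h | h
          · exfalso
            apply haT
            rw [← ha] at h
            rw [← h]
            exact hv
          · exact h
      · have : l.take (i + 1) = l.take i := by
          rw [List.take_of_length_le (by omega), List.take_of_length_le (by omega)]
        apply ih
        simpa only [hA, this] using hT
  have hAfull : A l.length = Finset.univ := by
    apply Finset.eq_univ_of_forall
    intro v
    simp only [hA, List.take_length, List.mem_toFinset]
    exact hmem v
  have hAS : A S.toList.length = S := by
    simp only [hA, hl]
    rw [List.take_left]
    ext v; simp
  refine ⟨x, ⟨?_, ?_⟩, ?_⟩
  · intro T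
    exact lem2 l.length T (by rw [hAfull]; exact Finset.subset_univ T)
  · have := lem1 l.length
    rwa [hAfull] at this
  · have := lem1 S.toList.length
    rwa [hAS] at this

/-- If `μ ≥ max{0, -f(V)}` and `μ = -f(W)` for some `W ⊆ V`, then
`L₁(f_μ) ≤ 4 L₁(f)`. -/
theorem Lone_muEnlargement_le (f : Finset V → ℝ) (hf : IsSubmodular f) (h0 : f ∅ = 0)
    (μ : ℝ) (hμ : max 0 (-(f Finset.univ)) ≤ μ)
    (W : Finset V) (hW : f W = -μ) :
    Lone (muEnlargement f μ) ≤ 4 * Lone f := by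
  classical
  -- boundedness of the t-set for f
  set C : ℝ := ∑ v : V, (|f {v}| + |f Finset.univ - f (Finset.univ.erase v)|) with hC
  have hbdd : BddAbove {t : ℝ | ∃ x ∈ basePolytope f, t = ∑ v, |x v|} := by
    refine ⟨C, ?_⟩
    rintro t ⟨x, ⟨hx1, hx2⟩, rfl⟩
    rw [hC]
    apply Finset.sum_le_sum
    intro v _
    have h1 : x v ≤ f {v} := by
      have := hx1 {v}
      simpa using this
    have h2 : f Finset.univ - f (Finset.univ.erase v) ≤ x v := by
      have h3 := hx1 (Finset.univ.erase v)
      have h4 : ∑ u ∈ Finset.univ.erase v, x u = (∑ u, x u) - x v := by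
        rw [Finset.sum_erase_eq_sub (Finset.mem_univ v)]
      rw [h4, hx2] at h3
      linarith
    rw [abs_le]
    constructor
    · have : -(f Finset.univ - f (Finset.univ.erase v)) ≤ |f Finset.univ - f (Finset.univ.erase v)| :=
        neg_le_abs _
      have hnn : 0 ≤ |f {v}| := abs_nonneg _
      linarith
    · have : f {v} ≤ |f {v}| := le_abs_self _
      have hnn : 0 ≤ |f Finset.univ - f (Finset.univ.erase v)| := abs_nonneg _
      linarith
  -- key: f T ≤ Lone f for every T
  have hkey : ∀ T : Finset V, f T ≤ Lone f := by
    intro T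
    obtain ⟨x, hx, hxT⟩ := exists_base_tight f hf h0 T
    have h1 : f T ≤ ∑ v, |x v| := by
      rw [← hxT]
      calc ∑ v ∈ T, x v ≤ ∑ v ∈ T, |x v| := Finset.sum_le_sum fun v _ => le_abs_self _
        _ ≤ ∑ v, |x v| := Finset.sum_le_sum_of_subset_of_nonneg (Finset.subset_univ T)
            (fun v _ _ => abs_nonneg _)
    exact h1.trans (le_csSup hbdd ⟨x, hx, rfl⟩)
  have hkeyneg : ∀ T : Finset V, -(f T) ≤ Lone f := by
    intro T
    obtain ⟨x, hx, hxT⟩ := exists_base_tight f hf h0 T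
    have h1 : -(f T) ≤ ∑ v, |x v| := by
      rw [← hxT]
      calc -∑ v ∈ T, x v = ∑ v ∈ T, -(x v) := by rw [Finset.sum_neg_distrib]
        _ ≤ ∑ v ∈ T, |x v| := Finset.sum_le_sum fun v _ => neg_le_abs _
        _ ≤ ∑ v, |x v| := Finset.sum_le_sum_of_subset_of_nonneg (Finset.subset_univ T)
            (fun v _ _ => abs_nonneg _)
    exact h1.trans (le_csSup hbdd ⟨x, hx, rfl⟩)
  have hL0 : 0 ≤ Lone f := by
    have := hkey ∅
    linarith [h0 ▸ this]
  have hμL : μ ≤ Lone f := by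
    have := hkeyneg W
    rw [hW] at this
    linarith
  apply Real.sSup_le
  · rintro t ⟨y, ⟨hy1, hy2⟩, rfl⟩
    have hyuniv : ∑ v, y v = 0 := by
      rw [hy2]
      simp [muEnlargement]
    set P : Finset V := Finset.univ.filter (fun v => 0 < y v) with hP
    have habs : ∑ v, |y v| = 2 * ∑ v ∈ P, y v := by
      have hPc : Pᶜ = Finset.univ.filter (fun v => ¬ 0 < y v) := by
        rw [hP, Finset.compl_filter]
      have hsplit : ∑ v, |y v| = ∑ v ∈ P, |y v| + ∑ v ∈ Pᶜ, |y v| := by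
        rw [hP, hPc]
        exact (Finset.sum_filter_add_sum_filter_not Finset.univ _ _).symm
      have h1 : ∑ v ∈ P, |y v| = ∑ v ∈ P, y v := by
        apply Finset.sum_congr rfl
        intro v hv
        rw [hP, Finset.mem_filter] at hv
        exact abs_of_pos hv.2
      have h2 : ∑ v ∈ Pᶜ, |y v| = -∑ v ∈ Pᶜ, y v := by
        rw [← Finset.sum_neg_distrib]
        apply Finset.sum_congr rfl
        intro v hv
        rw [Finset.mem_compl, hP, Finset.mem_filter] at hv
        push_neg at hv
        exact abs_of_nonpos (hv (Finset.mem_univ v))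
      have h3 : ∑ v ∈ P, y v + ∑ v ∈ Pᶜ, y v = 0 := by
        rw [Finset.sum_add_sum_compl]
        exact hyuniv
      rw [hsplit, h1, h2]
      linarith
    have hPnonneg : 0 ≤ ∑ v ∈ P, y v := by
      apply Finset.sum_nonneg
      intro v hv
      rw [hP, Finset.mem_filter] at hv
      exact le_of_lt hv.2
    rw [habs]
    by_cases hcase : P = ∅ ∨ P = Finset.univ
    · have hle := hy1 P
      rw [muEnlargement, if_pos hcase] at hle
      nlinarith
    · have hle := hy1 P
      rw [muEnlargement, if_neg hcase] at hle
      have h1 : f P ≤ Lone f := hkey P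
      linarith
  · linarith
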